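/- Let n be a natural number and λ : Fin n → ℝ with λ_j > 0 for all j. Then the supremum, over all entire functions f : ℂⁿ → ℂ, of |f(0)|² / ‖f‖²_{φ₀} (computed in the extended nonnegative reals [0,∞], with the conventions x/∞ = 0 and 0/0 = 0) equals (∏_j λ_j)/π^n, and this supremum is attained by the constant function f ≡ 1. -/

import Mathlib

open scoped ENNReal NNReal Real
open MeasureTheory

theorem meanval (g : ℂ → ℂ) (hg : Differentiable ℂ g) :
    ∫ θ in (0:ℝ)..(2*Real.pi), g (Complex.exp (θ * Complex.I)) = (2*Real.pi) * g 0 := by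
  have h := Complex.circleIntegral_sub_center_inv_smul_of_differentiable_on_off_countable
    (f := g) (c := 0) (R := 1) one_pos Set.countable_empty
    hg.continuous.continuousOn (fun z _ => hg z)
  have h2 : (∮ z in C(0, 1), (z - 0)⁻¹ • g z)
      = Complex.I * ∫ θ in (0:ℝ)..(2*Real.pi), g (Complex.exp (θ * Complex.I)) := by
    simp only [circleIntegral, deriv_circleMap, circleMap, Complex.ofReal_one, one_mul,
      Complex.ofReal_zero, zero_add, sub_zero, smul_eq_mul]
    rw [← intervalIntegral.integral_const_mul]
    congr 1; ext θ
    have : Complex.exp (θ * Complex.I) ≠ 0 := Complex.exp_ne_zero _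
    field_simp
  rw [h2] at h
  apply mul_left_cancel₀ Complex.I_ne_zero
  rw [h, smul_eq_mul]; ring

lemma normsq_eq (w : ℂ) : ‖w‖^2 = w.re^2 + w.im^2 := by
  rw [Complex.sq_norm, Complex.normSq_apply]; ring

lemma factored {l : ℝ} :
    (fun w : ℂ => Real.exp (-(l * ‖w‖^2)))
      = (fun p : ℝ × ℝ => Real.exp (-(l * p.1^2)) * Real.exp (-(l * p.2^2)))
        ∘ Complex.measurableEquivRealProd := by
  funext w
  have : Complex.measurableEquivRealProd w = (w.re, w.im) := rfl
  simp only [Function.comp_apply, this]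
  rw [← Real.exp_add, normsq_eq]
  ring_nf

lemma integrableGaussC {l : ℝ} (hl : 0 < l) :
    Integrable (fun w : ℂ => Real.exp (-(l * ‖w‖^2))) := by
  rw [factored]
  have h : Integrable (fun x : ℝ => Real.exp (-l * x^2)) := integrable_exp_neg_mul_sq hl
  simp only [neg_mul] at h
  have hRR : Integrable (fun p : ℝ × ℝ => Real.exp (-(l * p.1^2)) * Real.exp (-(l * p.2^2))) := by
    rw [Measure.volume_eq_prod]; exact h.mul_prod h
  exact (Complex.volume_preserving_equiv_real_prod.integrable_comp_emb
    (MeasurableEquiv.measurableEmbedding _)).mpr hRR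

lemma integralGaussC {l : ℝ} (hl : 0 < l) :
    ∫ w : ℂ, Real.exp (-(l * ‖w‖^2)) = Real.pi / l := by
  rw [factored, Function.comp_def, MeasurePreserving.integral_comp
    (g := fun p : ℝ × ℝ => Real.exp (-(l * p.1^2)) * Real.exp (-(l * p.2^2)))
    Complex.volume_preserving_equiv_real_prod (MeasurableEquiv.measurableEmbedding _)]
  rw [Measure.volume_eq_prod]
  rw [integral_prod_mul (f := fun x : ℝ => Real.exp (-(l*x^2)))
    (g := fun y : ℝ => Real.exp (-(l*y^2)))]
  have h : ∫ x : ℝ, Real.exp (-l * x^2) = √(Real.pi / l) := integral_gaussian l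
  simp only [neg_mul] at h
  rw [h, Real.mul_self_sqrt (by positivity)]

lemma gaussN (n : ℕ) (lam : Fin n → ℝ) (hlam : ∀ j, 0 < lam j) :
    ∫⁻ z : Fin n → ℂ,
        ENNReal.ofReal (Real.exp (-(∑ j : Fin n, lam j * ‖z j‖ ^ 2)))
      = ∏ j : Fin n, ENNReal.ofReal (Real.pi / lam j) := by
  have hfac : ∀ z : Fin n → ℂ,
      Real.exp (-(∑ j : Fin n, lam j * ‖z j‖ ^ 2))
        = ∏ j : Fin n, Real.exp (-(lam j * ‖z j‖ ^ 2)) := by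
    intro z
    rw [← Real.exp_sum]
    congr 1
    rw [← Finset.sum_neg_distrib]
  have hint : Integrable (fun z : Fin n → ℂ => ∏ j, Real.exp (-(lam j * ‖z j‖ ^ 2))) :=
    Integrable.fintype_prod (f := fun j (w : ℂ) => Real.exp (-(lam j * ‖w‖ ^ 2)))
      fun j => integrableGaussC (hlam j)
  simp_rw [hfac]
  rw [← MeasureTheory.ofReal_integral_eq_lintegral_ofReal hint
    (Filter.Eventually.of_forall fun z => Finset.prod_nonneg fun j _ => (Real.exp_pos _).le)]
  rw [integral_fintype_prod_volume_eq_prod (ι := Fin n)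
    (f := fun j (w : ℂ) => Real.exp (-(lam j * ‖w‖ ^ 2)))]
  rw [ENNReal.ofReal_prod_of_nonneg (fun j _ => by positivity)]
  exact Finset.prod_congr rfl fun j _ => by rw [integralGaussC (hlam j)]

lemma rot1_pres (θ : ℝ) : MeasurePreserving (fun w : ℂ => Complex.exp (θ * Complex.I) * w)
    volume volume := by
  have h : (fun w : ℂ => Complex.exp (θ * Complex.I) * w) = rotation (Circle.exp θ) := by
    funext w; simp [rotation_apply, Circle.coe_exp]
  rw [h]
  exact (rotation (Circle.exp θ)).measurePreserving

lemma rot_pres (n : ℕ) (θ : ℝ) :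
    MeasurePreserving (fun z : Fin n → ℂ => fun j => Complex.exp (θ * Complex.I) * z j)
      volume volume :=
  MeasureTheory.volume_preserving_pi fun _ => rot1_pres θ

lemma norm_rot (θ : ℝ) (w : ℂ) : ‖Complex.exp (θ * Complex.I) * w‖ = ‖w‖ := by
  rw [norm_mul, Complex.norm_exp_ofReal_mul_I, one_mul]

example : Real.HolderConjugate 2 2 := by constructor <;> norm_num

lemma key_pt (n : ℕ) (f : (Fin n → ℂ) → ℂ) (hf : Differentiable ℂ f) (z : Fin n → ℂ) :
    (‖f 0‖₊ : ℝ≥0∞) ^ 2 ≤ (ENNReal.ofReal (2 * Real.pi))⁻¹ *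
      ∫⁻ θ in Set.Ioc (0:ℝ) (2 * Real.pi),
        (‖f (fun j => Complex.exp (θ * Complex.I) * z j)‖₊ : ℝ≥0∞) ^ 2 := by
  have pi2pos : (0:ℝ) < 2 * Real.pi := by positivity
  set g : ℂ → ℂ := fun w => f (fun j => w * z j) with hgdef
  have hg : Differentiable ℂ g :=
    hf.comp (differentiable_pi.mpr fun j => differentiable_id.mul_const (z j))
  have hg0 : g 0 = f 0 := by
    simp only [hgdef]; congr 1; funext j; simp
  have hgth : ∀ θ : ℝ, g (Complex.exp (θ * Complex.I))
      = f (fun j => Complex.exp (θ * Complex.I) * z j) := fun θ => rfl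
  have hcont : Continuous fun θ : ℝ => g (Complex.exp (θ * Complex.I)) :=
    hg.continuous.comp (Complex.continuous_exp.comp (Complex.continuous_ofReal.mul continuous_const))
  have hInt : IntegrableOn (fun θ : ℝ => g (Complex.exp (θ * Complex.I)))
      (Set.Ioc 0 (2 * Real.pi)) := hcont.integrableOn_Ioc
  -- real mean value bound
  have hr : 2 * Real.pi * ‖f 0‖ ≤ ∫ θ in Set.Ioc (0:ℝ) (2 * Real.pi),
      ‖g (Complex.exp (θ * Complex.I))‖ := by
    have hm := meanval g hg
    have h1 : ‖∫ θ in (0:ℝ)..(2 * Real.pi), g (Complex.exp (θ * Complex.I))‖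
        = 2 * Real.pi * ‖f 0‖ := by
      rw [hm, hg0, norm_mul]
      congr 1
      rw [norm_mul]
      simp [abs_of_nonneg Real.pi_pos.le]
    calc 2 * Real.pi * ‖f 0‖ = ‖∫ θ in (0:ℝ)..(2 * Real.pi), g (Complex.exp (θ * Complex.I))‖ :=
          h1.symm
      _ ≤ ∫ θ in Set.uIoc (0:ℝ) (2 * Real.pi), ‖g (Complex.exp (θ * Complex.I))‖ :=
          intervalIntegral.norm_integral_le_integral_norm_uIoc
      _ = _ := by rw [Set.uIoc_of_le pi2pos.le]
  -- pass to ℝ≥0∞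
  set c : ℝ≥0∞ := ENNReal.ofReal (2 * Real.pi) with hc
  have hc0 : c ≠ 0 := by simp [hc, ENNReal.ofReal_eq_zero, not_le, pi2pos, Real.pi_pos]
  have hctop : c ≠ ∞ := ENNReal.ofReal_ne_top
  set ν := volume.restrict (Set.Ioc (0:ℝ) (2 * Real.pi)) with hν
  set a : ℝ → ℝ≥0∞ := fun θ => (‖g (Complex.exp (θ * Complex.I))‖₊ : ℝ≥0∞) with ha
  have hameas : Measurable a := hcont.nnnorm.measurable.coe_nnreal_ennreal
  have step1 : c * (‖f 0‖₊ : ℝ≥0∞) ≤ ∫⁻ θ, a θ ∂ν := by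
    have h2 : ENNReal.ofReal (2 * Real.pi * ‖f 0‖)
        ≤ ENNReal.ofReal (∫ θ in Set.Ioc (0:ℝ) (2 * Real.pi),
            ‖g (Complex.exp (θ * Complex.I))‖) := ENNReal.ofReal_le_ofReal hr
    rw [ofReal_integral_norm_eq_lintegral_enorm hInt] at h2
    rw [ENNReal.ofReal_mul pi2pos.le, ofReal_norm] at h2
    exact h2
  -- Cauchy–Schwarz
  have hconj : Real.HolderConjugate 2 2 := by constructor <;> norm_num
  have hH := ENNReal.lintegral_mul_le_Lp_mul_Lq ν hconj hameas.aemeasurable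
    (aemeasurable_const (b := (1:ℝ≥0∞)))
  have hone : ∫⁻ θ, (1:ℝ≥0∞) ^ (2:ℝ) ∂ν = c := by
    simp [hν, hc, Real.volume_Ioc, pi2pos.le]
  have hsq : ∫⁻ θ, a θ ^ (2:ℝ) ∂ν = ∫⁻ θ, a θ ^ 2 ∂ν := by
    congr 1; funext θ
    rw [show (2:ℝ) = ((2:ℕ):ℝ) by norm_num, ENNReal.rpow_natCast]
  simp only [Pi.mul_apply, mul_one] at hH
  rw [hone, hsq] at hH
  set S : ℝ≥0∞ := ∫⁻ θ, a θ ^ 2 ∂ν with hS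
  -- square
  have hsqineq : (c * (‖f 0‖₊ : ℝ≥0∞)) ^ 2 ≤ S * c := by
    calc (c * (‖f 0‖₊ : ℝ≥0∞)) ^ 2 ≤ (∫⁻ θ, a θ ∂ν) ^ 2 := pow_le_pow_left' step1 2
      _ ≤ (S ^ ((1:ℝ)/2) * c ^ ((1:ℝ)/2)) ^ 2 := pow_le_pow_left' hH 2
      _ = S * c := by
          rw [mul_pow, ← ENNReal.rpow_natCast (S ^ ((1:ℝ)/2)) 2,
            ← ENNReal.rpow_natCast (c ^ ((1:ℝ)/2)) 2, ← ENNReal.rpow_mul, ← ENNReal.rpow_mul]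
          norm_num
  have hfin : (‖f 0‖₊ : ℝ≥0∞) ^ 2 * c ≤ S := by
    refine (ENNReal.mul_le_mul_iff_left hc0 hctop).mp ?_
    calc (‖f 0‖₊ : ℝ≥0∞) ^ 2 * c * c = (c * (‖f 0‖₊ : ℝ≥0∞)) ^ 2 := by ring
      _ ≤ S * c := hsqineq
  have final : (‖f 0‖₊ : ℝ≥0∞) ^ 2 ≤ c⁻¹ * S := by
    rw [← ENNReal.div_eq_inv_mul]
    exact (ENNReal.le_div_iff_mul_le (Or.inl hc0) (Or.inl hctop)).mpr hfin
  exact final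

lemma key_ineq (n : ℕ) (lam : Fin n → ℝ) (hlam : ∀ j, 0 < lam j)
    (f : (Fin n → ℂ) → ℂ) (hf : Differentiable ℂ f) :
    (‖f 0‖₊ : ℝ≥0∞) ^ 2 * (∏ j : Fin n, ENNReal.ofReal (Real.pi / lam j))
      ≤ ∫⁻ z : Fin n → ℂ,
          (‖f z‖₊ : ℝ≥0∞) ^ 2 *
            ENNReal.ofReal (Real.exp (-(∑ j : Fin n, lam j * ‖z j‖ ^ 2))) := by
  have pi2pos : (0:ℝ) < 2 * Real.pi := by positivity
  set c : ℝ≥0∞ := ENNReal.ofReal (2 * Real.pi) with hc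
  have hc0 : c ≠ 0 := by simp [hc, ENNReal.ofReal_eq_zero, not_le, pi2pos, Real.pi_pos]
  have hctop : c ≠ ∞ := ENNReal.ofReal_ne_top
  set W : (Fin n → ℂ) → ℝ≥0∞ :=
    fun z => ENNReal.ofReal (Real.exp (-(∑ j : Fin n, lam j * ‖z j‖ ^ 2))) with hW
  have hWcont : Continuous W := by
    apply ENNReal.continuous_ofReal.comp
    apply Real.continuous_exp.comp
    apply Continuous.neg
    exact continuous_finset_sum _ fun j _ =>
      continuous_const.mul (((continuous_apply j).norm).pow 2)
  have hWinv : ∀ (θ : ℝ) (z : Fin n → ℂ),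
      W (fun j => Complex.exp (θ * Complex.I) * z j) = W z := by
    intro θ z; simp only [hW, norm_rot]
  set x : ℝ≥0∞ := (‖f 0‖₊ : ℝ≥0∞) ^ 2 with hx
  set G : (Fin n → ℂ) → ℝ≥0∞ := fun z => (‖f z‖₊ : ℝ≥0∞) ^ 2 * W z with hG
  have hGmeas : Measurable G :=
    ((hf.continuous.nnnorm.measurable.coe_nnreal_ennreal).pow_const 2).mul hWcont.measurable
  set ν := volume.restrict (Set.Ioc (0:ℝ) (2 * Real.pi)) with hν
  have hνuniv : ν Set.univ = c := by
    simp [hν, Real.volume_Ioc, hc]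
  have hrotcont : Continuous fun p : (Fin n → ℂ) × ℝ =>
      f (fun j => Complex.exp (p.2 * Complex.I) * p.1 j) := by
    apply hf.continuous.comp
    exact continuous_pi fun j =>
      (Complex.continuous_exp.comp
        ((Complex.continuous_ofReal.comp continuous_snd).mul continuous_const)).mul
        ((continuous_apply j).comp continuous_fst)
  set F : (Fin n → ℂ) → ℝ → ℝ≥0∞ :=
    fun z θ => (‖f (fun j => Complex.exp (θ * Complex.I) * z j)‖₊ : ℝ≥0∞) ^ 2 * W z with hF
  have hFmeas : Measurable (Function.uncurry F) := by
    apply Measurable.mul (f := fun p : (Fin n → ℂ) × ℝ =>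
      (‖f (fun j => Complex.exp (p.2 * Complex.I) * p.1 j)‖₊ : ℝ≥0∞) ^ 2) (g := fun p => W p.1)
    · exact (hrotcont.nnnorm.measurable.coe_nnreal_ennreal).pow_const 2
    · exact hWcont.measurable.comp measurable_fst
  have step1 : x * (∏ j : Fin n, ENNReal.ofReal (Real.pi / lam j))
      ≤ c⁻¹ * ∫⁻ z, (∫⁻ θ, F z θ ∂ν) := by
    rw [← gaussN n lam hlam]
    rw [← lintegral_const_mul x hWcont.measurable]
    have hb : ∀ z, x * W z ≤ (c⁻¹ * ∫⁻ θ,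
        (‖f (fun j => Complex.exp (θ * Complex.I) * z j)‖₊ : ℝ≥0∞) ^ 2 ∂ν) * W z :=
      fun z => mul_le_mul_left (key_pt n f hf z) _
    refine le_trans (lintegral_mono hb) (le_of_eq ?_)
    simp_rw [mul_assoc]
    rw [lintegral_const_mul' c⁻¹ _ (ENNReal.inv_ne_top.mpr hc0)]
    congr 1
    apply lintegral_congr
    intro z
    rw [← lintegral_mul_const' (W z) _ ENNReal.ofReal_ne_top]
  have step2 : ∫⁻ z, (∫⁻ θ, F z θ ∂ν) = ∫⁻ θ, (∫⁻ z, F z θ) ∂ν :=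
    lintegral_lintegral_swap hFmeas.aemeasurable
  have step3 : ∀ θ : ℝ, ∫⁻ z, F z θ = ∫⁻ z, G z := by
    intro θ
    have : ∀ z, F z θ = G ((fun z : Fin n → ℂ => fun j => Complex.exp (θ * Complex.I) * z j) z) :=
      fun z => by simp only [hF, hG, hWinv]
    simp_rw [this]
    exact (rot_pres n θ).lintegral_comp hGmeas
  calc x * (∏ j : Fin n, ENNReal.ofReal (Real.pi / lam j))
      ≤ c⁻¹ * ∫⁻ z, (∫⁻ θ, F z θ ∂ν) := step1
    _ = c⁻¹ * ∫⁻ θ, (∫⁻ z, F z θ) ∂ν := by rw [step2]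
    _ = c⁻¹ * ((∫⁻ z, G z) * c) := by
        simp_rw [step3]
        rw [lintegral_const, hνuniv]
    _ = ∫⁻ z, G z := by
        rw [mul_comm (∫⁻ z, G z) c, ← mul_assoc, ENNReal.inv_mul_cancel hc0 hctop, one_mul]

lemma Binv (n : ℕ) (lam : Fin n → ℝ) (hlam : ∀ j, 0 < lam j) :
    (∏ j : Fin n, ENNReal.ofReal (Real.pi / lam j))⁻¹
      = (∏ j : Fin n, ENNReal.ofReal (lam j)) / ENNReal.ofReal Real.pi ^ n := by
  have hprodpos : 0 < ∏ j : Fin n, Real.pi / lam j :=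
    Finset.prod_pos fun j _ => div_pos Real.pi_pos (hlam j)
  have hlamprodpos : 0 < ∏ j : Fin n, lam j := Finset.prod_pos fun j _ => hlam j
  rw [← ENNReal.ofReal_prod_of_nonneg (fun j _ => (div_pos Real.pi_pos (hlam j)).le),
    ← ENNReal.ofReal_inv_of_pos hprodpos]
  have h2 : (∏ j : Fin n, Real.pi / lam j)⁻¹ = (∏ j : Fin n, lam j) / Real.pi ^ n := by
    rw [Finset.prod_div_distrib, Finset.prod_const, Finset.card_univ, Fintype.card_fin,
      inv_div]
  rw [h2, ENNReal.ofReal_div_of_pos (by positivity),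
    ENNReal.ofReal_prod_of_nonneg (fun j _ => (hlam j).le),
    ENNReal.ofReal_pow Real.pi_pos.le]

/-- The model extremal function of the Fock space at the origin:
the supremum over entire `f` of `|f(0)|²/‖f‖²_{φ₀}` (in `[0,∞]`) equals
`(∏ j, λ j)/π^n`, and it is attained by the constant function `1`. -/
theorem fock_extremal_value (n : ℕ) (lam : Fin n → ℝ) (hlam : ∀ j, 0 < lam j) :
    (⨆ (f : (Fin n → ℂ) → ℂ) (_ : Differentiable ℂ f),
        (‖f 0‖₊ : ℝ≥0∞) ^ 2 /
          ∫⁻ z : Fin n → ℂ,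
            (‖f z‖₊ : ℝ≥0∞) ^ 2 *
              ENNReal.ofReal (Real.exp (-(∑ j : Fin n, lam j * ‖z j‖ ^ 2))))
      = (∏ j : Fin n, ENNReal.ofReal (lam j)) / ENNReal.ofReal Real.pi ^ n ∧
    (‖(fun _ : Fin n → ℂ => (1 : ℂ)) 0‖₊ : ℝ≥0∞) ^ 2 /
        (∫⁻ z : Fin n → ℂ,
          (‖(fun _ : Fin n → ℂ => (1 : ℂ)) z‖₊ : ℝ≥0∞) ^ 2 *
            ENNReal.ofReal (Real.exp (-(∑ j : Fin n, lam j * ‖z j‖ ^ 2))))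
      = (∏ j : Fin n, ENNReal.ofReal (lam j)) / ENNReal.ofReal Real.pi ^ n := by
  have hB0 : (∏ j : Fin n, ENNReal.ofReal (Real.pi / lam j)) ≠ 0 :=
    Finset.prod_ne_zero_iff.mpr fun j _ => by
      simp [ENNReal.ofReal_eq_zero, not_le, div_pos Real.pi_pos (hlam j)]
  have hpart2 :
      (‖(fun _ : Fin n → ℂ => (1 : ℂ)) 0‖₊ : ℝ≥0∞) ^ 2 /
        (∫⁻ z : Fin n → ℂ,
          (‖(fun _ : Fin n → ℂ => (1 : ℂ)) z‖₊ : ℝ≥0∞) ^ 2 *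
            ENNReal.ofReal (Real.exp (-(∑ j : Fin n, lam j * ‖z j‖ ^ 2))))
      = (∏ j : Fin n, ENNReal.ofReal (lam j)) / ENNReal.ofReal Real.pi ^ n := by
    simp only [nnnorm_one, ENNReal.coe_one, one_pow, one_mul]
    rw [gaussN n lam hlam, one_div, Binv n lam hlam]
  refine ⟨le_antisymm ?_ ?_, hpart2⟩
  · refine iSup₂_le fun f hf => ?_
    set x : ℝ≥0∞ := (‖f 0‖₊ : ℝ≥0∞) ^ 2 with hx
    by_cases hx0 : x = 0
    · simp [hx0]
    · have hxtop : x ≠ ∞ := by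
        simp [hx]
      have hkey := key_ineq n lam hlam f hf
      rw [← Binv n lam hlam]
      calc x / (∫⁻ z : Fin n → ℂ,
            (‖f z‖₊ : ℝ≥0∞) ^ 2 *
              ENNReal.ofReal (Real.exp (-(∑ j : Fin n, lam j * ‖z j‖ ^ 2))))
          ≤ x / (x * ∏ j : Fin n, ENNReal.ofReal (Real.pi / lam j)) :=
            ENNReal.div_le_div_left hkey x
        _ = (∏ j : Fin n, ENNReal.ofReal (Real.pi / lam j))⁻¹ := by
            rw [div_eq_mul_inv, ENNReal.mul_inv (Or.inl hx0) (Or.inl hxtop), ← mul_assoc,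
              ENNReal.mul_inv_cancel hx0 hxtop, one_mul]
  · exact le_iSup₂_of_le (fun _ : Fin n → ℂ => (1 : ℂ)) (differentiable_const 1)
      (le_of_eq hpart2.symm)
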